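/- Let E be a nonzero effective divisor on C. Let R_E be the ring of rational functions on C regular in a neighborhood of the support of E, and let I_E ⊆ R_E be the ideal of functions vanishing to order at least E (i.e., with order of vanishing at each point of supp E at least the coefficient of E at that point). Then there exists a k-linear functional σ : R_E → k factoring through the quotient R_E/I_E such that the induced k-bilinear map (a mod I_E, b mod I_E) ↦ σ(ab) : R_E/I_E × R_E/I_E → k is a perfect pairing of (deg E)-dimensional k-vector spaces. -/

import Mathlib

/-- All 2×2 minors of a matrix vanish, i.e. the matrix has rank at most 1. -/
def MinorsVanish {R : Type} [CommRing R] {m n : Type} (M : Matrix m n R) : Prop :=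
  ∀ i i' j j', M i j * M i' j' = M i j' * M i' j

/-- A matrix is `k`-general if some row and some column each consist of
`k`-linearly independent entries. -/
def KGeneral (k : Type) [Field k] {V : Type} [AddCommMonoid V] [Module k V]
    {m n : Type} (M : Matrix m n V) : Prop :=
  (∃ i, LinearIndependent k fun j => M i j) ∧ ∃ j, LinearIndependent k fun i => M i j

/-- Two matrices over a `k`-algebra are `k`-equivalent if `Y = Φ X Ψ` for some
invertible square matrices `Φ`, `Ψ` with entries in `k`. -/
def KEquivalent (k : Type) [Field k] {A : Type} [CommRing A] [Algebra k A]
    {m n : Type} [Fintype m] [Fintype n] [DecidableEq m] [DecidableEq n]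
    (X Y : Matrix m n A) : Prop :=
  ∃ (Φ : Matrix m m k) (Ψ : Matrix n n k), IsUnit Φ.det ∧ IsUnit Ψ.det ∧
    Y = Φ.map (algebraMap k A) * X * Ψ.map (algebraMap k A)

/-- An abstraction of a nonsingular projective curve `C` of genus `g` over an
algebraically closed field `k`, packaged together with its function field `F = k(C)`,
the divisor `div f` of a nonzero rational function (divisors are finitely supported
`ℤ`-valued functions on the points of `C`), the Riemann–Roch spaces
`L(D) = {f : f = 0 ∨ div f + D ≥ 0}`, the rings `R_E` of functions regular near the
support of a divisor and the ideals `I_E` of functions vanishing to order at least `E`,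
subject to the standard facts about them (including the Riemann–Roch theorem). -/
structure AbstractCurve (k : Type) [Field k] : Type 1 where
  /-- the points of the curve -/
  Point : Type
  /-- the function field `k(C)` -/
  F : Type
  [fieldF : Field F]
  [algF : Algebra k F]
  /-- the genus of the curve -/
  genus : ℕ
  /-- `divOf f` is the divisor of zeros and poles of `f` (junk value `0` at `f = 0`);
  its value at a point `p` is the order of vanishing of `f` at `p`. -/
  divOf : F → (Point →₀ ℤ)
  divOf_mul : ∀ f g : F, f ≠ 0 → g ≠ 0 → divOf (f * g) = divOf f + divOf g
  divOf_algebraMap : ∀ c : k, c ≠ 0 → divOf (algebraMap k F c) = 0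
  divOf_eq_zero_iff : ∀ f : F, f ≠ 0 →
    (divOf f = 0 ↔ ∃ c : k, c ≠ 0 ∧ f = algebraMap k F c)
  /-- a principal divisor has degree zero -/
  deg_divOf : ∀ f : F, f ≠ 0 → (divOf f).sum (fun _ n => n) = 0
  /-- the Riemann–Roch space `L(D)` as a `k`-subspace of the function field -/
  RR : (Point →₀ ℤ) → Submodule k F
  mem_RR : ∀ (D : Point →₀ ℤ) (f : F), f ∈ RR D ↔ f = 0 ∨ 0 ≤ divOf f + D
  finite_RR : ∀ D : Point →₀ ℤ, Module.Finite k (RR D)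
  /-- the Riemann–Roch theorem: `ℓ(D) = deg D - g + 1` whenever `deg D > 2g - 2` -/
  rank_RR : ∀ D : Point →₀ ℤ, 2 * (genus : ℤ) - 2 < D.sum (fun _ n => n) →
    (Module.finrank k (RR D) : ℤ) = D.sum (fun _ n => n) - genus + 1
  /-- the `k`-space `R_E` of functions regular in a neighborhood of the support of `E` -/
  Reg : (Point →₀ ℤ) → Submodule k F
  mem_Reg : ∀ (E : Point →₀ ℤ) (f : F),
    f ∈ Reg E ↔ f = 0 ∨ ∀ p ∈ E.support, 0 ≤ divOf f p
  /-- the `k`-space `I_E ⊆ R_E` of functions vanishing to order at least `E` -/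
  VanishIdeal : (Point →₀ ℤ) → Submodule k F
  mem_VanishIdeal : ∀ (E : Point →₀ ℤ) (f : F),
    f ∈ VanishIdeal E ↔ f = 0 ∨ ∀ p ∈ E.support, E p ≤ divOf f p

namespace AbstractCurve

attribute [instance] fieldF algF

variable {k : Type} [Field k]

/-- The degree of a divisor. -/
def deg (C : AbstractCurve k) (D : C.Point →₀ ℤ) : ℤ := D.sum fun _ n => n

/-- Linear equivalence of divisors: `D ~ D'` iff `D' = D + div f` for some `f ≠ 0`. -/
def LinEquiv (C : AbstractCurve k) (D D' : C.Point →₀ ℤ) : Prop :=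
  ∃ f : C.F, f ≠ 0 ∧ D' = D + C.divOf f

/-- A `G`-form: a square matrix with entries in `L(G)`, all of whose 2×2 minors vanish,
and which is `k`-general.  (In context its size is `n = ½ deg G - g + 1`.) -/
def IsGForm (C : AbstractCurve k) (G : C.Point →₀ ℤ) {n : ℕ}
    (X : Matrix (Fin n) (Fin n) C.F) : Prop :=
  (∀ i j, X i j ∈ C.RR G) ∧ MinorsVanish X ∧ KGeneral k X

/-- The `G`-form `X` represents the divisor `D` (of degree `½ deg G`): `X = u v` where
the entries of the column vector `u` form a `k`-basis of `L(D)` and the entries of the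
row vector `v` form a `k`-basis of `L(G - D)`. -/
def Represents (C : AbstractCurve k) (G D : C.Point →₀ ℤ) {n : ℕ}
    (X : Matrix (Fin n) (Fin n) C.F) : Prop :=
  ∃ u v : Fin n → C.F,
    LinearIndependent k u ∧ Submodule.span k (Set.range u) = C.RR D ∧
    LinearIndependent k v ∧ Submodule.span k (Set.range v) = C.RR (G - D) ∧
    ∀ i j, X i j = u i * v j

/-- An `E`-compression functional `ρ : L(G) → k` (realized as a `k`-linear functional
on the function field): `ρ` kills `L(G - E)`, and for every divisor `D` of degree
`½ deg G` the induced pairing `(a, b) ↦ ρ(ab)` on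
`L(D)/L(D-E) × L(G-D)/L(G-D-E)` is a perfect pairing of `(deg E)`-dimensional
`k`-vector spaces (expressed by nondegeneracy on both sides together with both
quotients having dimension `deg E`). -/
def IsCompression (C : AbstractCurve k) (G E : C.Point →₀ ℤ) (ρ : C.F →ₗ[k] k) : Prop :=
  (∀ f ∈ C.RR (G - E), ρ f = 0) ∧
  ∀ D : C.Point →₀ ℤ, 2 * C.deg D = C.deg G →
    (∀ a ∈ C.RR D, (∀ b ∈ C.RR (G - D), ρ (a * b) = 0) → a ∈ C.RR (D - E)) ∧
    (∀ b ∈ C.RR (G - D), (∀ a ∈ C.RR D, ρ (a * b) = 0) → b ∈ C.RR (G - D - E)) ∧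
    (Module.finrank k
      (C.RR D ⧸ Submodule.comap (C.RR D).subtype (C.RR (D - E))) : ℤ) = C.deg E ∧
    (Module.finrank k
      (C.RR (G - D) ⧸
        Submodule.comap (C.RR (G - D)).subtype (C.RR (G - D - E))) : ℤ) = C.deg E

end AbstractCurve
namespace AbstractCurve

variable {k : Type} [Field k] (C : AbstractCurve k)

/-! ### Degree lemmas -/

lemma deg_zero' : C.deg 0 = 0 := Finsupp.sum_zero_index

lemma deg_add' (D D' : C.Point →₀ ℤ) : C.deg (D + D') = C.deg D + C.deg D' :=
  Finsupp.sum_add_index' (fun _ => rfl) (fun _ _ _ => rfl)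

/-- degree as an additive monoid hom -/
noncomputable def degHom : (C.Point →₀ ℤ) →+ ℤ where
  toFun := C.deg
  map_zero' := C.deg_zero'
  map_add' := C.deg_add'

lemma degHom_apply (D : C.Point →₀ ℤ) : C.degHom D = C.deg D := rfl

lemma deg_sub' (D D' : C.Point →₀ ℤ) : C.deg (D - D') = C.deg D - C.deg D' := by
  rw [← degHom_apply, ← degHom_apply, ← degHom_apply, map_sub]

lemma deg_single' (p : C.Point) (n : ℤ) : C.deg (Finsupp.single p n) = n :=
  Finsupp.sum_single_index rfl

lemma deg_nsmul' (m : ℕ) (D : C.Point →₀ ℤ) : C.deg (m • D) = m * C.deg D := by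
  rw [← degHom_apply, map_nsmul, degHom_apply, nsmul_eq_mul]

lemma deg_nonneg' {D : C.Point →₀ ℤ} (h : 0 ≤ D) : 0 ≤ C.deg D :=
  Finset.sum_nonneg fun p _ => by simpa using Finsupp.le_def.mp h p

lemma deg_pos' {E : C.Point →₀ ℤ} (hE : 0 ≤ E) (hE0 : E ≠ 0) : 1 ≤ C.deg E := by
  obtain ⟨p, hp⟩ := Finsupp.support_nonempty_iff.mpr hE0
  have h1 : 1 ≤ E p := by
    have := Finsupp.le_def.mp hE p
    have hne : E p ≠ 0 := Finsupp.mem_support_iff.mp hp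
    simp at this; omega
  calc (1 : ℤ) ≤ E p := h1
    _ ≤ C.deg E := Finset.single_le_sum (fun r _ => by simpa using Finsupp.le_def.mp hE r) hp

/-! ### Riemann–Roch space lemmas -/

lemma mem_RR_iff {D : C.Point →₀ ℤ} {f : C.F} :
    f ∈ C.RR D ↔ f = 0 ∨ ∀ p, -(D p) ≤ C.divOf f p := by
  rw [C.mem_RR]
  refine or_congr Iff.rfl ?_
  rw [Finsupp.le_def]
  constructor
  · intro h p; have := h p; simp [Finsupp.add_apply] at this; linarith
  · intro h p; have := h p; simp [Finsupp.add_apply]; linarith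

lemma RR_mono {D D' : C.Point →₀ ℤ} (h : D ≤ D') : C.RR D ≤ C.RR D' := by
  intro f hf
  rcases C.mem_RR_iff.mp hf with h0 | h1
  · exact C.mem_RR_iff.mpr (Or.inl h0)
  · exact C.mem_RR_iff.mpr (Or.inr fun p =>
      le_trans (neg_le_neg (Finsupp.le_def.mp h p)) (h1 p))

lemma self_mem_RR {f : C.F} (hf : f ≠ 0) : f ∈ C.RR (-(C.divOf f)) :=
  C.mem_RR_iff.mpr (Or.inr fun p => by simp)

lemma divOf_one' : C.divOf 1 = 0 := by
  have := C.divOf_algebraMap 1 one_ne_zero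
  simpa using this

lemma algebraMap_ne_zero' {c : k} (hc : c ≠ 0) : algebraMap k C.F c ≠ 0 := by
  intro h
  exact hc ((map_eq_zero_iff _ (algebraMap k C.F).injective).mp h)

lemma divOf_smul' {c : k} (hc : c ≠ 0) (x : C.F) : C.divOf (c • x) = C.divOf x := by
  by_cases hx : x = 0
  · simp [hx]
  · rw [Algebra.smul_def, C.divOf_mul _ _ (C.algebraMap_ne_zero' hc) hx,
      C.divOf_algebraMap c hc, zero_add]

lemma divOf_neg' (x : C.F) : C.divOf (-x) = C.divOf x := by
  have := C.divOf_smul' (c := (-1 : k)) (by norm_num) x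
  simpa using this

lemma divOf_add_ge {x y : C.F} {p : C.Point} {n : ℤ}
    (hx : x = 0 ∨ n ≤ C.divOf x p) (hy : y = 0 ∨ n ≤ C.divOf y p) :
    x + y = 0 ∨ n ≤ C.divOf (x + y) p := by
  by_cases hx0 : x = 0
  · simpa [hx0] using hy
  by_cases hy0 : y = 0
  · simpa [hy0] using hx
  by_cases hxy : x + y = 0
  · exact Or.inl hxy
  right
  have hxn := hx.resolve_left hx0
  have hyn := hy.resolve_left hy0
  have key : x + y ∈ C.RR ((-(C.divOf x)) ⊔ (-(C.divOf y))) :=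
    add_mem (C.RR_mono le_sup_left (C.self_mem_RR hx0))
      (C.RR_mono le_sup_right (C.self_mem_RR hy0))
  have h := (C.mem_RR_iff.mp key).resolve_left hxy p
  rw [Finsupp.sup_apply] at h
  have hmax : (-(C.divOf x p)) ⊔ (-(C.divOf y p)) ≤ -n :=
    sup_le (by linarith) (by linarith)
  simp only [Finsupp.neg_apply] at h
  linarith

/-! ### Order submodules -/

/-- The submodule of functions vanishing to order at least `n` at `p`. -/
noncomputable def ordSub (p : C.Point) (n : ℤ) : Submodule k C.F where
  carrier := {x | x = 0 ∨ n ≤ C.divOf x p}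
  zero_mem' := Or.inl rfl
  add_mem' := fun hx hy => C.divOf_add_ge hx hy
  smul_mem' := by
    intro c x hx
    by_cases hc : c = 0
    · left; simp [hc]
    rcases hx with rfl | hx
    · left; simp
    · right; rw [C.divOf_smul' hc]; exact hx

lemma mem_ordSub {p : C.Point} {n : ℤ} {x : C.F} :
    x ∈ C.ordSub p n ↔ x = 0 ∨ n ≤ C.divOf x p := Iff.rfl

lemma ordSub_anti {p : C.Point} {n m : ℤ} (h : n ≤ m) : C.ordSub p m ≤ C.ordSub p n := by
  intro x hx
  rcases hx with rfl | hx
  · exact zero_mem _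
  · exact Or.inr (le_trans h hx)

lemma mul_mem_ordSub {p : C.Point} {n m : ℤ} {x y : C.F}
    (hx : x ∈ C.ordSub p n) (hy : y ∈ C.ordSub p m) : x * y ∈ C.ordSub p (n + m) := by
  rcases hx with rfl | hx
  · exact Or.inl (by simp)
  rcases hy with rfl | hy
  · exact Or.inl (by simp)
  by_cases hx0 : x = 0
  · exact Or.inl (by simp [hx0])
  by_cases hy0 : y = 0
  · exact Or.inl (by simp [hy0])
  right
  rw [C.divOf_mul _ _ hx0 hy0, Finsupp.add_apply]
  exact add_le_add hx hy

lemma RR_le_ordSub (D : C.Point →₀ ℤ) (p : C.Point) : C.RR D ≤ C.ordSub p (-(D p)) := by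
  intro x hx
  rcases C.mem_RR_iff.mp hx with rfl | h
  · exact zero_mem _
  · exact Or.inr (h p)

lemma divOf_add_exact {p : C.Point} {n : ℤ} {x y : C.F} (hx0 : x ≠ 0)
    (hx : C.divOf x p = n) (hy : y ∈ C.ordSub p (n + 1)) :
    x + y ≠ 0 ∧ C.divOf (x + y) p = n := by
  by_cases hy0 : y = 0
  · simp [hy0, hx0, hx]
  have hyv : n + 1 ≤ C.divOf y p := hy.resolve_left hy0
  have hxy : x + y ≠ 0 := by
    intro h
    have hyx : y = -x := by linear_combination h
    rw [hyx, C.divOf_neg', hx] at hyv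
    omega
  have hxm : x ∈ C.ordSub p n := Or.inr (le_of_eq hx.symm)
  have hge : n ≤ C.divOf (x + y) p :=
    (add_mem hxm (C.ordSub_anti (by omega) hy)).resolve_left hxy
  refine ⟨hxy, ?_⟩
  by_contra hne
  have hlt : n + 1 ≤ C.divOf (x + y) p := by omega
  have hx' : x ∈ C.ordSub p (n + 1) := by
    have hxe : x = (x + y) + (-y) := by ring
    rw [hxe]
    exact add_mem (Or.inr hlt) (neg_mem hy)
  rcases hx' with h0 | h1
  · exact hx0 h0
  · omega

/-! ### Reg and VanishIdeal lemmas -/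

lemma mem_Reg_of_ordSub {E : C.Point →₀ ℤ} {f : C.F}
    (h : ∀ p ∈ E.support, f ∈ C.ordSub p 0) : f ∈ C.Reg E := by
  by_cases hf : f = 0
  · exact (C.mem_Reg E f).mpr (Or.inl hf)
  · exact (C.mem_Reg E f).mpr (Or.inr fun p hp => (h p hp).resolve_left hf)

lemma mem_Vanish_of_ordSub {E : C.Point →₀ ℤ} {f : C.F}
    (h : ∀ p ∈ E.support, f ∈ C.ordSub p (E p)) : f ∈ C.VanishIdeal E := by
  by_cases hf : f = 0
  · exact (C.mem_VanishIdeal E f).mpr (Or.inl hf)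
  · exact (C.mem_VanishIdeal E f).mpr (Or.inr fun p hp => (h p hp).resolve_left hf)

lemma Reg_le_ordSub {E : C.Point →₀ ℤ} {p : C.Point} (hp : p ∈ E.support) :
    C.Reg E ≤ C.ordSub p 0 := by
  intro f hf
  rcases (C.mem_Reg E f).mp hf with rfl | h
  · exact zero_mem _
  · exact Or.inr (h p hp)

lemma Vanish_le_ordSub {E : C.Point →₀ ℤ} {p : C.Point} (hp : p ∈ E.support) :
    C.VanishIdeal E ≤ C.ordSub p (E p) := by
  intro f hf
  rcases (C.mem_VanishIdeal E f).mp hf with rfl | h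
  · exact zero_mem _
  · exact Or.inr (h p hp)

lemma one_mem_Reg (E : C.Point →₀ ℤ) : (1 : C.F) ∈ C.Reg E :=
  (C.mem_Reg E 1).mpr (Or.inr fun p _ => by rw [C.divOf_one']; simp)

lemma mul_mem_Reg {E : C.Point →₀ ℤ} {x y : C.F} (hx : x ∈ C.Reg E) (hy : y ∈ C.Reg E) :
    x * y ∈ C.Reg E :=
  C.mem_Reg_of_ordSub fun p hp => by
    simpa using C.mul_mem_ordSub (C.Reg_le_ordSub hp hx) (C.Reg_le_ordSub hp hy)

lemma pow_mem_Reg {E : C.Point →₀ ℤ} {x : C.F} (hx : x ∈ C.Reg E) (n : ℕ) :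
    x ^ n ∈ C.Reg E := by
  induction n with
  | zero => simpa using C.one_mem_Reg E
  | succ n ih => rw [pow_succ]; exact C.mul_mem_Reg ih hx

lemma Vanish_le_Reg {E : C.Point →₀ ℤ} (hE : 0 ≤ E) : C.VanishIdeal E ≤ C.Reg E := by
  intro f hf
  refine C.mem_Reg_of_ordSub fun p hp => ?_
  exact C.ordSub_anti (by simpa using Finsupp.le_def.mp hE p) (C.Vanish_le_ordSub hp hf)

lemma vanish_mul_reg {E : C.Point →₀ ℤ} {x y : C.F}
    (hx : x ∈ C.VanishIdeal E) (hy : y ∈ C.Reg E) : x * y ∈ C.VanishIdeal E :=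
  C.mem_Vanish_of_ordSub fun p hp => by
    simpa using C.mul_mem_ordSub (C.Vanish_le_ordSub hp hx) (C.Reg_le_ordSub hp hy)

lemma RR_le_Reg {E D : C.Point →₀ ℤ} (h : ∀ p ∈ E.support, D p ≤ 0) :
    C.RR D ≤ C.Reg E := fun x hx =>
  C.mem_Reg_of_ordSub fun p hp => C.ordSub_anti (by linarith [h p hp]) (C.RR_le_ordSub D p hx)

lemma RR_le_Vanish {E D : C.Point →₀ ℤ} (h : ∀ p ∈ E.support, D p ≤ -(E p)) :
    C.RR D ≤ C.VanishIdeal E := fun x hx =>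
  C.mem_Vanish_of_ordSub fun p hp => C.ordSub_anti (by linarith [h p hp]) (C.RR_le_ordSub D p hx)

end AbstractCurve
namespace AbstractCurve

variable {k : Type} [Field k] (C : AbstractCurve k)

lemma rank_RR' (D : C.Point →₀ ℤ) (h : 2 * (C.genus : ℤ) - 2 < C.deg D) :
    (Module.finrank k (C.RR D) : ℤ) = C.deg D - C.genus + 1 := C.rank_RR D h

/-- From Riemann–Roch: an element of `L(A)` with exact order `-A p` at `p`. -/
lemma exists_exact_order {A : C.Point →₀ ℤ} {p : C.Point}
    (h : 2 * (C.genus : ℤ) - 2 < C.deg A - 1) :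
    ∃ t : C.F, t ≠ 0 ∧ t ∈ C.RR A ∧ C.divOf t p = -(A p) := by
  classical
  haveI := C.finite_RR A
  haveI := C.finite_RR (A - Finsupp.single p 1)
  have hdeg : C.deg (A - Finsupp.single p 1) = C.deg A - 1 := by
    rw [C.deg_sub', C.deg_single']
  have h1 := C.rank_RR' A (by linarith)
  have h2 := C.rank_RR' (A - Finsupp.single p 1) (by rw [hdeg]; linarith)
  rw [hdeg] at h2
  have hle : A - Finsupp.single p 1 ≤ A := by
    rw [Finsupp.le_def]
    intro r
    simp only [Finsupp.sub_apply, Finsupp.single_apply]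
    split <;> omega
  have hne : C.RR (A - Finsupp.single p 1) ≠ C.RR A := by
    intro he
    rw [he] at h2
    omega
  obtain ⟨t, htA, htn⟩ := SetLike.exists_of_lt (lt_of_le_of_ne (C.RR_mono hle) hne)
  have ht0 : t ≠ 0 := by rintro rfl; exact htn (zero_mem _)
  refine ⟨t, ht0, htA, ?_⟩
  have hge : -(A p) ≤ C.divOf t p := (C.mem_RR_iff.mp htA).resolve_left ht0 p
  by_contra hne2
  have hgt : -(A p) + 1 ≤ C.divOf t p := by omega
  apply htn
  refine C.mem_RR_iff.mpr (Or.inr fun r => ?_)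
  simp only [Finsupp.sub_apply, Finsupp.single_apply]
  rcases eq_or_ne p r with rfl | hpr
  · simp only [if_pos rfl]; omega
  · rw [if_neg hpr]
    have := (C.mem_RR_iff.mp htA).resolve_left ht0 r
    omega

/-- There is a point outside the support of `E`. -/
lemma exists_point_off_support [Infinite k] {E : C.Point →₀ ℤ} (hE : 0 ≤ E) (hE0 : E ≠ 0) :
    ∃ q : C.Point, q ∉ E.support := by
  classical
  set g : ℤ := (C.genus : ℤ) with hg
  have hg0 : 0 ≤ g := Int.natCast_nonneg _
  have hd1 : 1 ≤ C.deg E := C.deg_pos' hE hE0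
  set m : ℕ := 2 * C.genus + 2 with hm
  set D : C.Point →₀ ℤ := m • E with hD
  have hdegD : C.deg D = m * C.deg E := C.deg_nsmul' m E
  have hdegD' : 2 * g - 2 < C.deg D := by
    rw [hdegD]
    have hm' : (m : ℤ) = 2 * g + 2 := by push_cast [hm, hg]; ring
    nlinarith
  haveI := C.finite_RR D
  have hrk := C.rank_RR' D hdegD'
  have hrk2 : 2 ≤ Module.finrank k (C.RR D) := by
    have hm' : (m : ℤ) = 2 * g + 2 := by push_cast [hm, hg]; ring
    have h2 : (2 : ℤ) ≤ (Module.finrank k (C.RR D) : ℤ) := by rw [hrk, hdegD]; nlinarith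
    exact_mod_cast h2
  -- find f in L(D) not in span {1}
  have hspan : ¬ (C.RR D ≤ Submodule.span k {(1 : C.F)}) := by
    intro hle
    have : Module.finrank k (C.RR D) ≤ Module.finrank k (Submodule.span k {(1 : C.F)}) := by
      exact Submodule.finrank_mono hle
    rw [finrank_span_singleton (one_ne_zero)] at this
    omega
  obtain ⟨f, hfD, hfspan⟩ := SetLike.not_le_iff_exists.mp hspan
  -- bad constants
  set Bad : Set k := ⋃ p ∈ (E.support : Set C.Point), {e : k | f - e • 1 ∈ C.ordSub p 1}
    with hBad
  have hBadFin : Bad.Finite := by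
    refine Set.Finite.biUnion (E.support.finite_toSet) fun p _ => ?_
    refine Set.Subsingleton.finite fun e he e' he' => ?_
    simp only [Set.mem_setOf_eq] at he he'
    by_contra hne
    have hsub : (f - e • 1) - (f - e' • 1) ∈ C.ordSub p 1 := sub_mem he he'
    have heq : (f - e • 1) - (f - e' • 1) = (e' - e) • (1 : C.F) := by
      rw [sub_smul]; ring
    rw [heq] at hsub
    have hne' : e' - e ≠ 0 := sub_ne_zero.mpr (Ne.symm hne)
    rcases hsub with h0 | h1
    · exact hne' (by simpa [smul_eq_zero] using h0)
    · rw [C.divOf_smul' hne', C.divOf_one'] at h1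
      simp at h1
  obtain ⟨e, he⟩ := (hBadFin.infinite_compl).nonempty
  have heBad : e ∉ Bad := he
  set h : C.F := f - e • 1 with hh
  have hnots : ∀ p ∈ E.support, h ∉ C.ordSub p 1 := by
    intro p hp hmem
    exact heBad (Set.mem_biUnion (by exact_mod_cast hp) hmem)
  obtain ⟨p₀, hp₀⟩ := Finsupp.support_nonempty_iff.mpr hE0
  have hne0 : h ≠ 0 := fun h0 => hnots p₀ hp₀ (h0 ▸ zero_mem _)
  have hdivne : C.divOf h ≠ 0 := by
    intro hdiv
    obtain ⟨cc, hcc, hccf⟩ := (C.divOf_eq_zero_iff h hne0).mp hdiv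
    apply hfspan
    have : f = (e + cc) • (1 : C.F) := by
      rw [add_smul]
      have : h = cc • (1 : C.F) := by rw [hccf, Algebra.algebraMap_eq_smul_one]
      rw [hh] at this
      linear_combination this
    rw [this]
    exact Submodule.smul_mem _ _ (Submodule.mem_span_singleton_self _)
  have hsum := C.deg_divOf h hne0
  -- there is a point where divOf h is positive
  have hpos : ∃ q, 0 < C.divOf h q := by
    by_contra hnone
    push_neg at hnone
    apply hdivne
    ext r
    by_cases hr : r ∈ (C.divOf h).support
    · have hz : ∀ r ∈ (C.divOf h).support, C.divOf h r ≤ 0 := fun r _ => hnone r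
      have := (Finset.sum_eq_zero_iff_of_nonpos hz).mp hsum r hr
      simpa using this
    · simpa using Finsupp.notMem_support_iff.mp hr
  obtain ⟨q, hq⟩ := hpos
  refine ⟨q, fun hqE => ?_⟩
  exact hnots q hqE (Or.inr (by omega))

end AbstractCurve
namespace AbstractCurve

variable {k : Type} [Field k] (C : AbstractCurve k)

lemma reg_decomp {E : C.Point →₀ ℤ} (hE : 0 ≤ E) (hE0 : E ≠ 0) {q : C.Point}
    (hq : q ∉ E.support) {N : ℤ} (hN : 2 * (C.genus : ℤ) - 2 + C.deg E < N) :
    ∀ a' ∈ C.Reg E, ∃ x ∈ C.RR (Finsupp.single q N), a' - x ∈ C.VanishIdeal E := by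
  classical
  intro a' ha'
  have hd1 : 1 ≤ C.deg E := C.deg_pos' hE hE0
  have hg0 : (0 : ℤ) ≤ (C.genus : ℤ) := Int.natCast_nonneg _
  have hN0 : 0 ≤ N := by linarith
  by_cases h0 : a' = 0
  · exact ⟨0, zero_mem _, by simp [h0]⟩
  set B : C.Point →₀ ℤ := (-(C.divOf a')) ⊔ 0 with hB
  have hB0 : (0 : C.Point →₀ ℤ) ≤ B := le_sup_right
  have hBsup : ∀ p ∈ E.support, B p = 0 := by
    intro p hp
    have h1 : 0 ≤ C.divOf a' p := ((C.mem_Reg E a').mp ha').resolve_left h0 p hp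
    rw [hB, Finsupp.sup_apply]
    simp only [Finsupp.neg_apply, Finsupp.coe_zero, Pi.zero_apply]
    exact sup_eq_right.mpr (by omega)
  have haB : a' ∈ C.RR B := by
    refine C.mem_RR_iff.mpr (Or.inr fun p => ?_)
    have h1 : -(C.divOf a' p) ≤ B p := by
      rw [hB, Finsupp.sup_apply]
      simp only [Finsupp.neg_apply]
      exact le_sup_left
    omega
  set B' : C.Point →₀ ℤ := Finsupp.single q N + B with hB'
  have hsingle0 : (0 : C.Point →₀ ℤ) ≤ Finsupp.single q N := by
    rw [Finsupp.le_def]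
    intro r
    simp only [Finsupp.single_apply, Finsupp.coe_zero, Pi.zero_apply]
    split <;> omega
  have hBB' : B ≤ B' := le_add_of_nonneg_left hsingle0
  have hsN_le : Finsupp.single q N ≤ B' := le_add_of_nonneg_right hB0
  have hBp' : ∀ p ∈ E.support, B' p = 0 := by
    intro p hp
    have hq' : q ≠ p := fun h => hq (h ▸ hp)
    rw [hB', Finsupp.add_apply, Finsupp.single_apply, if_neg hq', hBsup p hp]
    ring
  have hdegB : 0 ≤ C.deg B := C.deg_nonneg' hB0
  have hdB' : C.deg B' = N + C.deg B := by rw [hB', C.deg_add', C.deg_single']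
  haveI := C.finite_RR (Finsupp.single q N)
  haveI := C.finite_RR (Finsupp.single q N - E)
  haveI := C.finite_RR B'
  haveI := C.finite_RR (B' - E)
  have f1 := C.rank_RR' (Finsupp.single q N) (by rw [C.deg_single']; linarith)
  have f2 := C.rank_RR' (Finsupp.single q N - E)
    (by rw [C.deg_sub', C.deg_single']; linarith)
  have f3 := C.rank_RR' B' (by rw [hdB']; linarith)
  have f4 := C.rank_RR' (B' - E) (by rw [C.deg_sub', hdB']; linarith)
  rw [C.deg_single'] at f1
  rw [C.deg_sub', C.deg_single'] at f2
  rw [hdB'] at f3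
  rw [C.deg_sub', hdB'] at f4
  have hinf : C.RR (Finsupp.single q N) ⊓ C.RR (B' - E) = C.RR (Finsupp.single q N - E) := by
    apply le_antisymm
    · rintro x hx
      obtain ⟨hx1, hx2⟩ := Submodule.mem_inf.mp hx
      rcases eq_or_ne x 0 with rfl | hx0
      · exact zero_mem _
      refine C.mem_RR_iff.mpr (Or.inr fun r => ?_)
      have h1 := (C.mem_RR_iff.mp hx1).resolve_left hx0 r
      have h2 := (C.mem_RR_iff.mp hx2).resolve_left hx0 r
      simp only [Finsupp.sub_apply] at h2 ⊢
      by_cases hr : r ∈ E.support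
      · have hq' : q ≠ r := fun h => hq (h ▸ hr)
        have hB'r : B' r = 0 := hBp' r hr
        have hs : (Finsupp.single q N : C.Point →₀ ℤ) r = 0 := by
          rw [Finsupp.single_apply, if_neg hq']
        rw [hB'r] at h2
        rw [hs]
        omega
      · have hEr : E r = 0 := Finsupp.notMem_support_iff.mp hr
        omega
    · exact le_inf (C.RR_mono (sub_le_self _ hE)) (C.RR_mono (sub_le_sub_right hsN_le E))
  have hsup : C.RR (Finsupp.single q N) ⊔ C.RR (B' - E) = C.RR B' := by
    have hle : C.RR (Finsupp.single q N) ⊔ C.RR (B' - E) ≤ C.RR B' :=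
      sup_le (C.RR_mono hsN_le) (C.RR_mono (sub_le_self _ hE))
    refine Submodule.eq_of_le_of_finrank_le hle ?_
    have heq := Submodule.finrank_sup_add_finrank_inf_eq
      (C.RR (Finsupp.single q N)) (C.RR (B' - E))
    rw [hinf] at heq
    omega
  have haB' : a' ∈ C.RR (Finsupp.single q N) ⊔ C.RR (B' - E) :=
    hsup ▸ (C.RR_mono hBB' haB)
  obtain ⟨x, hx, y, hy, hxy⟩ := Submodule.mem_sup.mp haB'
  refine ⟨x, hx, ?_⟩
  have hax : a' - x = y := by linear_combination -hxy
  rw [hax]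
  refine C.RR_le_Vanish (fun p hp => ?_) hy
  have := hBp' p hp
  simp only [Finsupp.sub_apply]
  omega

lemma finrank_quot {E : C.Point →₀ ℤ} (hE : 0 ≤ E) (hE0 : E ≠ 0) {q : C.Point}
    (hq : q ∉ E.support) {N : ℤ} (hN : 2 * (C.genus : ℤ) - 2 + C.deg E < N) :
    (Module.finrank k
      (↥(C.Reg E) ⧸ Submodule.comap (C.Reg E).subtype (C.VanishIdeal E)) : ℤ) = C.deg E := by
  classical
  have hd1 : 1 ≤ C.deg E := C.deg_pos' hE hE0
  have hg0 : (0 : ℤ) ≤ (C.genus : ℤ) := Int.natCast_nonneg _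
  set I' := Submodule.comap (C.Reg E).subtype (C.VanishIdeal E) with hI'
  have hRegle : C.RR (Finsupp.single q N) ≤ C.Reg E := by
    refine C.RR_le_Reg fun p hp => ?_
    have hq' : q ≠ p := fun h => hq (h ▸ hp)
    simp [Finsupp.single_apply, if_neg hq']
  set ψ := I'.mkQ.comp (Submodule.inclusion hRegle) with hψ
  have hsurj : Function.Surjective ψ := by
    intro z
    obtain ⟨s, rfl⟩ := I'.mkQ_surjective z
    obtain ⟨x, hx, hdiff⟩ := C.reg_decomp hE hE0 hq hN s.1 s.2
    refine ⟨⟨x, hx⟩, ?_⟩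
    show I'.mkQ (Submodule.inclusion hRegle ⟨x, hx⟩) = I'.mkQ s
    rw [Submodule.mkQ_apply, Submodule.mkQ_apply, Submodule.Quotient.eq]
    show (Submodule.inclusion hRegle ⟨x, hx⟩ : C.F) - (s : C.F) ∈ C.VanishIdeal E
    have : (Submodule.inclusion hRegle ⟨x, hx⟩ : C.F) = x := rfl
    rw [this]
    have := neg_mem hdiff
    simpa using this
  have hker : LinearMap.ker ψ
      = Submodule.comap (C.RR (Finsupp.single q N)).subtype (C.RR (Finsupp.single q N - E)) := by
    ext ⟨xv, hxv⟩
    have hmk : ψ ⟨xv, hxv⟩ = I'.mkQ (Submodule.inclusion hRegle ⟨xv, hxv⟩) := rfl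
    rw [LinearMap.mem_ker, hmk, Submodule.mkQ_apply, Submodule.Quotient.mk_eq_zero]
    have hiff1 : (Submodule.inclusion hRegle ⟨xv, hxv⟩ : ↥(C.Reg E)) ∈ I'
        ↔ xv ∈ C.VanishIdeal E := Iff.rfl
    have hiff2 : (⟨xv, hxv⟩ : ↥(C.RR (Finsupp.single q N)))
        ∈ Submodule.comap (C.RR (Finsupp.single q N)).subtype (C.RR (Finsupp.single q N - E))
        ↔ xv ∈ C.RR (Finsupp.single q N - E) := Iff.rfl
    rw [hiff1, hiff2]
    constructor
    · intro hv
      rcases eq_or_ne xv 0 with hx0 | hx0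
      · rw [hx0]; exact zero_mem _
      refine C.mem_RR_iff.mpr (Or.inr fun r => ?_)
      have h1 := (C.mem_RR_iff.mp hxv).resolve_left hx0 r
      by_cases hr : r ∈ E.support
      · have hv' := ((C.mem_VanishIdeal E _).mp hv).resolve_left hx0 r hr
        have hq' : q ≠ r := fun h => hq (h ▸ hr)
        have hs : (Finsupp.single q N : C.Point →₀ ℤ) r = 0 := by
          rw [Finsupp.single_apply, if_neg hq']
        simp only [Finsupp.sub_apply, hs]
        omega
      · have hEr : E r = 0 := Finsupp.notMem_support_iff.mp hr
        simp only [Finsupp.sub_apply, hEr]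
        omega
    · intro hrr
      refine C.RR_le_Vanish (fun p hp => ?_) hrr
      have hq' : q ≠ p := fun h => hq (h ▸ hp)
      simp only [Finsupp.sub_apply, Finsupp.single_apply, if_neg hq']
      omega
  haveI := C.finite_RR (Finsupp.single q N)
  haveI := C.finite_RR (Finsupp.single q N - E)
  have f1 := C.rank_RR' (Finsupp.single q N) (by rw [C.deg_single']; linarith)
  have f2 := C.rank_RR' (Finsupp.single q N - E)
    (by rw [C.deg_sub', C.deg_single']; linarith)
  rw [C.deg_single'] at f1
  rw [C.deg_sub', C.deg_single'] at f2
  have h5 := LinearMap.finrank_range_add_finrank_ker ψ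
  rw [LinearMap.range_eq_top.mpr hsurj] at h5
  rw [finrank_top] at h5
  have h6 : Module.finrank k (LinearMap.ker ψ) = Module.finrank k (C.RR (Finsupp.single q N - E)) := by
    rw [hker]
    exact (Submodule.comapSubtypeEquivOfLe (C.RR_mono (sub_le_self _ hE))).finrank_eq
  rw [h6] at h5
  omega

end AbstractCurve
namespace AbstractCurve

variable {k : Type} [Field k] (C : AbstractCurve k)

lemma exists_good_element [Infinite k] {E : C.Point →₀ ℤ} (hE : 0 ≤ E) (hE0 : E ≠ 0)
    {q : C.Point} (hq : q ∉ E.support) :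
    ∃ (a : C.F) (c : C.Point → k),
      a ∈ C.Reg E ∧ (∀ p ∈ E.support, ∀ p' ∈ E.support, c p = c p' → p = p') ∧
      (∀ p ∈ E.support, ∀ r : k,
        (a - algebraMap k C.F r ≠ 0) ∧
        (r = c p → C.divOf (a - algebraMap k C.F r) p = 1) ∧
        (r ≠ c p → C.divOf (a - algebraMap k C.F r) p = 0)) := by
  classical
  have hd1 : 1 ≤ C.deg E := C.deg_pos' hE hE0
  have hg0 : (0 : ℤ) ≤ (C.genus : ℤ) := Int.natCast_nonneg _
  have hE' : ∀ r, 0 ≤ E r := fun r => by simpa using Finsupp.le_def.mp hE r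
  have hEp : ∀ p ∈ E.support, 1 ≤ E p := by
    intro p hp
    have := Finsupp.mem_support_iff.mp hp
    have := hE' p
    omega
  set N : ℤ := 2 * (C.genus : ℤ) + 2 * C.deg E + 2 with hN
  have hval : ∀ (p : C.Point) (np : ℤ) (r : C.Point),
      (Finsupp.single q N - (E + E) + Finsupp.single p np) r
        = (if q = r then N else 0) - 2 * E r + (if p = r then np else 0) := by
    intro p np r
    simp only [Finsupp.add_apply, Finsupp.sub_apply, Finsupp.single_apply]
    ring
  have hdeg : ∀ (p : C.Point) (np : ℤ),
      C.deg (Finsupp.single q N - (E + E) + Finsupp.single p np)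
        = N - 2 * C.deg E + np := by
    intro p np
    rw [C.deg_add', C.deg_sub', C.deg_single', C.deg_single', C.deg_add']
    ring
  -- per-point construction
  have key : ∀ p ∈ E.support, ∃ w t : C.F,
      w ∈ C.Reg E ∧ t ∈ C.Reg E ∧ (t ≠ 0 ∧ C.divOf t p = 1) ∧
      ((1 : C.F) - w ∈ C.ordSub p 2) ∧
      (∀ p' ∈ E.support, p' ≠ p → w ∈ C.ordSub p' 2 ∧ t ∈ C.ordSub p' 2) := by
    intro p hp
    have hq'p : q ≠ p := fun h => hq (h ▸ hp)
    have hEp1 : 1 ≤ E p := hEp p hp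
    have hmemord : ∀ (np : ℤ), np ≤ 2 * E p →
        ∀ (x : C.F), x ∈ C.RR (Finsupp.single q N - (E + E) + Finsupp.single p np) →
        (∀ p' ∈ E.support, p' ≠ p → x ∈ C.ordSub p' (2 * E p')) ∧ x ∈ C.Reg E := by
      intro np hnp x hx
      constructor
      · intro p' hp' hne
        have hm := C.RR_le_ordSub _ p' hx
        have hq'' : q ≠ p' := fun h => hq (h ▸ hp')
        have hlev : -((Finsupp.single q N - (E + E) + Finsupp.single p np) p') = 2 * E p' := by
          rw [hval, if_neg hq'', if_neg (fun h => hne h.symm)]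
          ring
        rw [hlev] at hm
        exact hm
      · refine C.RR_le_Reg (fun p'' hp'' => ?_) hx
        have hq'' : q ≠ p'' := fun h => hq (h ▸ hp'')
        rw [hval, if_neg hq'']
        have := hE' p''
        by_cases hpp : p = p''
        · rw [if_pos hpp]
          subst hpp
          omega
        · rw [if_neg hpp]
          omega
    -- the function t with a simple zero at p
    obtain ⟨t, ht0, htA, htord⟩ := C.exists_exact_order
      (A := Finsupp.single q N - (E + E) + Finsupp.single p (2 * E p - 1)) (p := p)
      (by rw [hdeg]; omega)
    have htordp : C.divOf t p = 1 := by
      rw [htord, hval, if_neg hq'p, if_pos rfl]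
      ring
    -- the function r nonvanishing at p
    obtain ⟨rp, hr0, hrB, hrord⟩ := C.exists_exact_order
      (A := Finsupp.single q N - (E + E) + Finsupp.single p (2 * E p)) (p := p)
      (by rw [hdeg]; omega)
    have hrordp : C.divOf rp p = 0 := by
      rw [hrord, hval, if_neg hq'p, if_pos rfl]
      ring
    -- decomposition of L(Nq) as L(Nq - p) ⊕ k·1
    haveI := C.finite_RR (Finsupp.single q N)
    haveI := C.finite_RR (Finsupp.single q N - Finsupp.single p 1)
    have fV := C.rank_RR' (Finsupp.single q N) (by rw [C.deg_single']; omega)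
    have fJ := C.rank_RR' (Finsupp.single q N - Finsupp.single p 1)
      (by rw [C.deg_sub', C.deg_single', C.deg_single']; omega)
    rw [C.deg_single'] at fV
    rw [C.deg_sub', C.deg_single', C.deg_single'] at fJ
    have h1V : (1 : C.F) ∈ C.RR (Finsupp.single q N) := by
      refine C.mem_RR_iff.mpr (Or.inr fun r => ?_)
      rw [C.divOf_one']
      simp only [Finsupp.coe_zero, Pi.zero_apply, Finsupp.single_apply]
      split <;> omega
    have hJV : C.RR (Finsupp.single q N - Finsupp.single p 1) ≤ C.RR (Finsupp.single q N) := C.RR_mono (sub_le_self _ (by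
      rw [Finsupp.le_def]; intro r
      simp only [Finsupp.single_apply, Finsupp.coe_zero, Pi.zero_apply]
      split <;> omega))
    have hJord : C.RR (Finsupp.single q N - Finsupp.single p 1) ≤ C.ordSub p 1 := by
      have hm := C.RR_le_ordSub (Finsupp.single q N - Finsupp.single p 1) p
      have hlev : -((Finsupp.single q N - Finsupp.single p 1 : C.Point →₀ ℤ) p) = 1 := by
        rw [Finsupp.sub_apply, Finsupp.single_apply, Finsupp.single_apply, if_pos rfl,
          if_neg hq'p]
        ring
      rw [hlev] at hm
      exact hm
    have hinf0 : C.RR (Finsupp.single q N - Finsupp.single p 1) ⊓ Submodule.span k {(1 : C.F)} = ⊥ := by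
      rw [eq_bot_iff]
      rintro x hx
      obtain ⟨hxJ, hxs⟩ := Submodule.mem_inf.mp hx
      obtain ⟨e, he⟩ := Submodule.mem_span_singleton.mp hxs
      by_cases he0 : e = 0
      · simp only [Submodule.mem_bot]
        rw [← he, he0, zero_smul]
      · exfalso
        have hx0 : x ≠ 0 := by
          rw [← he]
          simp [smul_eq_zero, he0]
        have h1 : 1 ≤ C.divOf x p := (hJord hxJ).resolve_left hx0
        rw [← he, C.divOf_smul' he0, C.divOf_one'] at h1
        simp at h1
    have hsum : C.RR (Finsupp.single q N - Finsupp.single p 1) ⊔ Submodule.span k {(1 : C.F)}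
        = C.RR (Finsupp.single q N) := by
      have hle : C.RR (Finsupp.single q N - Finsupp.single p 1) ⊔ Submodule.span k {(1 : C.F)}
          ≤ C.RR (Finsupp.single q N) :=
        sup_le hJV (Submodule.span_le.mpr (Set.singleton_subset_iff.mpr h1V))
      refine Submodule.eq_of_le_of_finrank_le hle ?_
      have heq := Submodule.finrank_sup_add_finrank_inf_eq
        (C.RR (Finsupp.single q N - Finsupp.single p 1)) (Submodule.span k {(1 : C.F)})
      rw [hinf0, finrank_bot, finrank_span_singleton (one_ne_zero (α := C.F))] at heq
      omega
    have hrV : rp ∈ C.RR (Finsupp.single q N) := by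
      refine C.RR_mono ?_ hrB
      rw [Finsupp.le_def]
      intro r
      rw [hval]
      simp only [Finsupp.single_apply]
      have := hE' r
      by_cases h1 : q = r <;> by_cases h2 : p = r <;>
        simp only [if_pos, if_neg, h1, h2, if_true, if_false] <;> first | omega | (subst h2; omega)
    rw [← hsum] at hrV
    obtain ⟨jj, hjj, z, hz, hjz⟩ := Submodule.mem_sup.mp hrV
    obtain ⟨α, hα⟩ := Submodule.mem_span_singleton.mp hz
    have hα0 : α ≠ 0 := by
      rintro rfl
      rw [zero_smul] at hα
      have hrpJ : rp ∈ C.RR (Finsupp.single q N - Finsupp.single p 1) := by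
        rw [← hjz, ← hα, add_zero]; exact hjj
      have h1 : 1 ≤ C.divOf rp p := (hJord hrpJ).resolve_left hr0
      omega
    set u : C.F := α⁻¹ • rp with hu
    have hu1 : u - 1 ∈ C.RR (Finsupp.single q N - Finsupp.single p 1) := by
      have huu : u = α⁻¹ • jj + 1 := by
        rw [hu, ← hjz, smul_add, ← hα, smul_smul, inv_mul_cancel₀ hα0, one_smul]
      rw [huu, add_sub_cancel_right]
      exact Submodule.smul_mem _ _ hjj
    set w : C.F := u + u - u * u with hw
    have hw2 : (1 : C.F) - w ∈ C.ordSub p 2 := by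
      have hfac : (1 : C.F) - w = (1 - u) * (1 - u) := by rw [hw]; ring
      rw [hfac]
      have h1u : (1 : C.F) - u ∈ C.ordSub p 1 := by
        have := neg_mem (hJord hu1)
        simpa using this
      have := C.mul_mem_ordSub h1u h1u
      simpa using this
    have hrReg : rp ∈ C.Reg E := (hmemord (2 * E p) (le_refl _) rp hrB).2
    have huReg : u ∈ C.Reg E := Submodule.smul_mem _ _ hrReg
    have hwReg : w ∈ C.Reg E := sub_mem (add_mem huReg huReg) (C.mul_mem_Reg huReg huReg)
    have hwother : ∀ p' ∈ E.support, p' ≠ p → w ∈ C.ordSub p' 2 := by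
      intro p' hp' hne
      have hEp'1 : 1 ≤ E p' := hEp p' hp'
      have hr' : rp ∈ C.ordSub p' (2 * E p') :=
        (hmemord (2 * E p) (le_refl _) rp hrB).1 p' hp' hne
      have hu' : u ∈ C.ordSub p' (2 * E p') := Submodule.smul_mem _ _ hr'
      have huu : u * u ∈ C.ordSub p' (2 * E p' + 2 * E p') := C.mul_mem_ordSub hu' hu'
      exact sub_mem (C.ordSub_anti (by omega) (add_mem hu' hu'))
        (C.ordSub_anti (by omega) huu)
    have htmem := hmemord (2 * E p - 1) (by omega) t htA
    refine ⟨w, t, hwReg, htmem.2, ⟨ht0, htordp⟩, hw2, fun p' hp' hne => ?_⟩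
    have hEp'1 : 1 ≤ E p' := hEp p' hp'
    exact ⟨hwother p' hp' hne, C.ordSub_anti (by omega) (htmem.1 p' hp' hne)⟩
  choose w t hwReg htReg htex hw2 hother using key
  -- injective labels
  obtain ⟨c, hcinj⟩ : ∃ c : C.Point → k,
      ∀ p ∈ E.support, ∀ p' ∈ E.support, c p = c p' → p = p' := by
    let emb := Infinite.natEmbedding k
    let eqv := E.support.equivFin
    refine ⟨fun p => if h : p ∈ E.support then emb (eqv ⟨p, h⟩) else 0, ?_⟩
    intro p hp p' hp' hcc
    simp only [dif_pos hp, dif_pos hp'] at hcc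
    have h1 := emb.injective hcc
    have h2 := eqv.injective (Fin.ext h1)
    exact congrArg Subtype.val h2
  set a : C.F := ∑ p ∈ E.support.attach, (c p.1 • w p.1 p.2 + t p.1 p.2) with ha
  have haReg : a ∈ C.Reg E := Submodule.sum_mem _ fun p _ =>
    add_mem (Submodule.smul_mem _ _ (hwReg p.1 p.2)) (htReg p.1 p.2)
  have hexact : ∀ (p0 : C.Point) (hp0 : p0 ∈ E.support),
      a - algebraMap k C.F (c p0) ≠ 0 ∧ C.divOf (a - algebraMap k C.F (c p0)) p0 = 1 := by
    intro p0 hp0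
    have hmem0 : (⟨p0, hp0⟩ : {x // x ∈ E.support}) ∈ E.support.attach := Finset.mem_attach _ _
    set y : C.F := (c p0 • w p0 hp0 - algebraMap k C.F (c p0))
        + ∑ p ∈ E.support.attach.erase ⟨p0, hp0⟩, (c p.1 • w p.1 p.2 + t p.1 p.2) with hy
    have hymem : y ∈ C.ordSub p0 2 := by
      refine add_mem ?_ (Submodule.sum_mem _ fun p hpe => ?_)
      · have hrw : c p0 • w p0 hp0 - algebraMap k C.F (c p0) = c p0 • (w p0 hp0 - 1) := by
          rw [Algebra.algebraMap_eq_smul_one, smul_sub]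
        rw [hrw]
        refine Submodule.smul_mem _ _ ?_
        have := neg_mem (hw2 p0 hp0)
        simpa using this
      · have hne : p.1 ≠ p0 := by
          intro h
          exact (Finset.ne_of_mem_erase hpe) (Subtype.ext h)
        exact add_mem (Submodule.smul_mem _ _ (hother p.1 p.2 p0 hp0 (fun h => hne h.symm)).1)
          (hother p.1 p.2 p0 hp0 (fun h => hne h.symm)).2
    have heq : a - algebraMap k C.F (c p0) = t p0 hp0 + y := by
      rw [hy, ha, ← Finset.add_sum_erase _ _ hmem0]
      ring
    rw [heq]
    exact C.divOf_add_exact (htex p0 hp0).1 (htex p0 hp0).2 (by simpa using hymem)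
  refine ⟨a, c, haReg, hcinj, ?_⟩
  intro p hp r
  have hne0 : a - algebraMap k C.F r ≠ 0 ∧
      (r ≠ c p → C.divOf (a - algebraMap k C.F r) p = 0) := by
    by_cases hrc : r = c p
    · subst hrc
      exact ⟨(hexact p hp).1, fun h => absurd rfl h⟩
    · have hcr0 : c p - r ≠ 0 := sub_ne_zero.mpr (Ne.symm hrc)
      have hx0 : algebraMap k C.F (c p - r) ≠ 0 := C.algebraMap_ne_zero' hcr0
      have hxd : C.divOf (algebraMap k C.F (c p - r)) p = 0 := by
        rw [C.divOf_algebraMap _ hcr0]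
        simp
      have hy : a - algebraMap k C.F (c p) ∈ C.ordSub p 1 :=
        Or.inr (by rw [(hexact p hp).2])
      have hcomb := C.divOf_add_exact hx0 hxd (by simpa using hy)
      have hrw : algebraMap k C.F (c p - r) + (a - algebraMap k C.F (c p))
          = a - algebraMap k C.F r := by
        rw [map_sub]
        ring
      rw [hrw] at hcomb
      exact ⟨hcomb.1, fun _ => hcomb.2⟩
  exact ⟨hne0.1, fun h => by rw [h]; exact (hexact p hp).2, hne0.2⟩

end AbstractCurve
namespace AbstractCurve

variable {k : Type} [Field k] (C : AbstractCurve k)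

lemma sum_count_le {α : Type} [DecidableEq α] (tf : Finset α) (s : Multiset α) :
    (∑ y ∈ tf, s.count y) ≤ Multiset.card s := by
  induction s using Multiset.induction with
  | empty => simp
  | cons a s ih =>
    have h1 : ∀ y, (a ::ₘ s).count y = s.count y + if y = a then 1 else 0 := by
      intro y; rw [Multiset.count_cons]
    rw [Finset.sum_congr rfl (fun y _ => h1 y), Finset.sum_add_distrib]
    have h2 : (∑ y ∈ tf, if y = a then 1 else 0) ≤ 1 := by
      rw [Finset.sum_ite_eq' tf a (fun _ => 1)]
      split <;> omega
    simp only [Multiset.card_cons]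
    omega

lemma divOf_prod_count [DecidableEq k] {a : C.F} {p : C.Point} {cp : k}
    (hne : ∀ r : k, a - algebraMap k C.F r ≠ 0)
    (h1 : C.divOf (a - algebraMap k C.F cp) p = 1)
    (h0 : ∀ r : k, r ≠ cp → C.divOf (a - algebraMap k C.F r) p = 0)
    {lc : k} (hlc : lc ≠ 0) (s : Multiset k) :
    C.divOf (algebraMap k C.F lc * (s.map fun r => a - algebraMap k C.F r).prod) p
      = s.count cp := by
  classical
  induction s using Multiset.induction with
  | empty => simp [C.divOf_algebraMap lc hlc]
  | cons r s ih =>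
    have hprodne : (Multiset.map (fun r => a - algebraMap k C.F r) s).prod ≠ 0 := by
      intro h
      obtain ⟨r', _, hr'⟩ := Multiset.mem_map.mp (Multiset.prod_eq_zero_iff.mp h)
      exact hne r' hr'
    have hrw : algebraMap k C.F lc
          * ((a - algebraMap k C.F r) * (s.map fun r => a - algebraMap k C.F r).prod)
        = (a - algebraMap k C.F r)
          * (algebraMap k C.F lc * (s.map fun r => a - algebraMap k C.F r).prod) := by
      ring
    rw [Multiset.map_cons, Multiset.prod_cons, hrw,
      C.divOf_mul _ _ (hne r) (mul_ne_zero (C.algebraMap_ne_zero' hlc) hprodne),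
      Finsupp.add_apply, ih, Multiset.count_cons]
    by_cases hrc : r = cp
    · subst hrc
      rw [h1, if_pos rfl]
      push_cast
      ring
    · rw [h0 r hrc, if_neg (fun h => hrc h.symm)]
      push_cast
      ring

end AbstractCurve
open AbstractCurve in
/-- Let `E` be a nonzero effective divisor, `R_E` the ring of
rational functions regular in a neighborhood of the support of `E`, and `I_E ⊆ R_E`
the ideal of functions vanishing to order at least `E`.  There exists a `k`-linear
functional `σ` on `R_E` (realized as a `k`-linear functional on the function field)
factoring through `R_E / I_E` such that the induced bilinear map
`(a, b) ↦ σ(ab)` on `R_E / I_E × R_E / I_E` is a perfect pairing of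
`(deg E)`-dimensional `k`-vector spaces. -/
theorem compression_pairing_exists (k : Type) [Field k] [IsAlgClosed k]
    (C : AbstractCurve k) (E : C.Point →₀ ℤ) (hE : 0 ≤ E) (hE0 : E ≠ 0) :
    ∃ σ : C.F →ₗ[k] k,
      (∀ f ∈ C.VanishIdeal E, σ f = 0) ∧
      (∀ a ∈ C.Reg E, (∀ b ∈ C.Reg E, σ (a * b) = 0) → a ∈ C.VanishIdeal E) ∧
      (∀ b ∈ C.Reg E, (∀ a ∈ C.Reg E, σ (a * b) = 0) → b ∈ C.VanishIdeal E) ∧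
      (Module.finrank k
        (C.Reg E ⧸ Submodule.comap (C.Reg E).subtype (C.VanishIdeal E)) : ℤ) =
        C.deg E := by
  classical
  obtain ⟨q, hq⟩ := C.exists_point_off_support hE hE0
  have hd1 : 1 ≤ C.deg E := C.deg_pos' hE hE0
  have hg0 : (0 : ℤ) ≤ (C.genus : ℤ) := Int.natCast_nonneg _
  set dN : ℕ := (C.deg E).toNat with hdN
  have hdNd : (dN : ℤ) = C.deg E := Int.toNat_of_nonneg (by omega)
  have hdN1 : 1 ≤ dN := by omega
  have hNcond : 2 * (C.genus : ℤ) - 2 + C.deg E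
      < 2 * (C.genus : ℤ) + 2 * C.deg E + 2 := by omega
  set I' := Submodule.comap (C.Reg E).subtype (C.VanishIdeal E) with hI'
  have hQrank : (Module.finrank k (↥(C.Reg E) ⧸ I') : ℤ) = C.deg E :=
    C.finrank_quot hE hE0 hq hNcond
  have hQrankN : Module.finrank k (↥(C.Reg E) ⧸ I') = dN := by omega
  obtain ⟨a, c, haReg, hcinj, hlin⟩ := C.exists_good_element hE hE0 hq
  have hpowmem : ∀ n : ℕ, a ^ n ∈ C.Reg E := C.pow_mem_Reg haReg
  set π := I'.mkQ with hπ
  set pw : ℕ → (↥(C.Reg E) ⧸ I') := fun n => π ⟨a ^ n, hpowmem n⟩ with hpw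
  -- no nonzero polynomial of degree < dN kills a mod I_E
  have hann : ∀ P : Polynomial k, P ≠ 0 → P.natDegree < dN →
      (Polynomial.aeval a P : C.F) ∉ C.VanishIdeal E := by
    intro P hP hdegP hmem
    have hlc0 : P.leadingCoeff ≠ 0 := Polynomial.leadingCoeff_ne_zero.mpr hP
    have hsplit := Polynomial.Splits.eq_prod_roots (IsAlgClosed.splits P)
    have heval : (Polynomial.aeval a P : C.F)
        = algebraMap k C.F P.leadingCoeff
          * (P.roots.map fun r => a - algebraMap k C.F r).prod := by
      conv_lhs => rw [hsplit]
      rw [map_mul, Polynomial.aeval_C, map_multiset_prod, Multiset.map_map]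
      congr 1
      refine congrArg Multiset.prod (Multiset.map_congr rfl fun r _ => ?_)
      simp [Function.comp]
    obtain ⟨p0, hp0⟩ := Finsupp.support_nonempty_iff.mpr hE0
    have hne : ∀ r : k, a - algebraMap k C.F r ≠ 0 := fun r => (hlin p0 hp0 r).1
    have hPane : (Polynomial.aeval a P : C.F) ≠ 0 := by
      rw [heval]
      refine mul_ne_zero (C.algebraMap_ne_zero' hlc0) ?_
      intro h
      obtain ⟨r', _, hr'⟩ := Multiset.mem_map.mp (Multiset.prod_eq_zero_iff.mp h)
      exact hne r' hr'
    have hcount : ∀ p ∈ E.support,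
        C.divOf (Polynomial.aeval a P : C.F) p = P.roots.count (c p) := by
      intro p hp
      rw [heval]
      exact C.divOf_prod_count hne ((hlin p hp (c p)).2.1 rfl)
        (fun r hr => (hlin p hp r).2.2 hr) hlc0 P.roots
    have hgeE : ∀ p ∈ E.support, E p ≤ (P.roots.count (c p) : ℤ) := by
      intro p hp
      have h := ((C.mem_VanishIdeal E _).mp hmem).resolve_left hPane p hp
      rw [hcount p hp] at h
      exact h
    have hsum1 : C.deg E ≤ ∑ p ∈ E.support, (P.roots.count (c p) : ℤ) := by
      have hde : C.deg E = ∑ p ∈ E.support, E p := rfl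
      rw [hde]
      exact Finset.sum_le_sum hgeE
    have hsum2 : (∑ p ∈ E.support, P.roots.count (c p)) ≤ Multiset.card P.roots := by
      have himg : ∑ y ∈ E.support.image c, P.roots.count y
          = ∑ p ∈ E.support, P.roots.count (c p) := Finset.sum_image hcinj
      rw [← himg]
      exact sum_count_le _ _
    have hcard := P.card_roots'
    have hfin : C.deg E < (dN : ℤ) := by
      calc C.deg E ≤ ∑ p ∈ E.support, (P.roots.count (c p) : ℤ) := hsum1
        _ = ((∑ p ∈ E.support, P.roots.count (c p) : ℕ) : ℤ) := by push_cast; rfl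
        _ ≤ (Multiset.card P.roots : ℤ) := by exact_mod_cast hsum2
        _ ≤ (P.natDegree : ℤ) := by exact_mod_cast hcard
        _ < (dN : ℤ) := by exact_mod_cast hdegP
    omega
  -- membership of sums of powers
  have hsmem : ∀ (γ : Fin dN → k) (e : Fin dN → ℕ),
      (∑ i : Fin dN, γ i • a ^ (e i)) ∈ C.Reg E := fun γ e =>
    Submodule.sum_mem _ fun i _ => Submodule.smul_mem _ _ (hpowmem _)
  have hπsum : ∀ (γ : Fin dN → k) (e : Fin dN → ℕ),
      π ⟨∑ i : Fin dN, γ i • a ^ (e i), hsmem γ e⟩ = ∑ i : Fin dN, γ i • pw (e i) := by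
    intro γ e
    have hsub : (⟨∑ i : Fin dN, γ i • a ^ (e i), hsmem γ e⟩ : ↥(C.Reg E))
        = ∑ i : Fin dN, γ i • (⟨a ^ (e i), hpowmem _⟩ : ↥(C.Reg E)) := by
      apply Subtype.ext
      simp
    rw [hsub, map_sum]
    simp only [map_smul]
    rfl
  -- linear independence of the powers
  have hind : LinearIndependent k (fun i : Fin dN => pw (i : ℕ)) := by
    rw [Fintype.linearIndependent_iff]
    intro γ hγ
    by_contra hγne
    push_neg at hγne
    obtain ⟨i₁, hi₁⟩ := hγne
    set P : Polynomial k := ∑ i : Fin dN, Polynomial.monomial (i : ℕ) (γ i) with hP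
    have hPcoeff : ∀ i : Fin dN, P.coeff (i : ℕ) = γ i := by
      intro i
      rw [hP, Polynomial.finset_sum_coeff]
      rw [Finset.sum_eq_single i]
      · rw [Polynomial.coeff_monomial, if_pos rfl]
      · intro j _ hji
        rw [Polynomial.coeff_monomial, if_neg (fun h => hji (Fin.ext h))]
      · intro h
        exact absurd (Finset.mem_univ i) h
    have hP0 : P ≠ 0 := fun h => hi₁ (by rw [← hPcoeff i₁, h, Polynomial.coeff_zero])
    have hPdeg : P.natDegree < dN := by
      have hle : P.natDegree ≤ dN - 1 := by
        refine Polynomial.natDegree_le_iff_degree_le.mpr ?_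
        rw [hP]
        refine le_trans (Polynomial.degree_sum_le _ _) ?_
        refine Finset.sup_le fun i _ => ?_
        refine le_trans (Polynomial.degree_monomial_le _ _) ?_
        exact_mod_cast Nat.cast_le.mpr (by omega : (i : ℕ) ≤ dN - 1)
      omega
    have heval : (Polynomial.aeval a P : C.F) = ∑ i : Fin dN, γ i • a ^ (i : ℕ) := by
      rw [hP, map_sum]
      congr 1
      funext i
      rw [Polynomial.aeval_monomial, Algebra.smul_def]
    have hπ0 : π ⟨∑ i : Fin dN, γ i • a ^ (i : ℕ), hsmem γ _⟩ = 0 := by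
      rw [hπsum γ (fun i => (i : ℕ))]
      exact hγ
    have hmem : (∑ i : Fin dN, γ i • a ^ (i : ℕ)) ∈ C.VanishIdeal E := by
      have := (Submodule.Quotient.mk_eq_zero I').mp (by rw [← Submodule.mkQ_apply]; exact hπ0)
      exact this
    exact hann P hP0 hPdeg (heval ▸ hmem)
  -- basis of the quotient given by powers of a
  have hcard : Fintype.card (Fin dN) = Module.finrank k (↥(C.Reg E) ⧸ I') := by
    simp [hQrankN]
  haveI : Nonempty (Fin dN) := ⟨⟨0, by omega⟩⟩
  set b := basisOfLinearIndependentOfCardEqFinrank hind hcard with hb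
  have hbv : ∀ i : Fin dN, b i = pw (i : ℕ) := by
    intro i
    rw [hb, coe_basisOfLinearIndependentOfCardEqFinrank]
  set lastI : Fin dN := ⟨dN - 1, by omega⟩ with hlast
  set σ₀ : (↥(C.Reg E) ⧸ I') →ₗ[k] k := b.coord lastI with hσ₀
  obtain ⟨S', hS'⟩ := Submodule.exists_isCompl (C.Reg E)
  set σ : C.F →ₗ[k] k :=
    σ₀ ∘ₗ π ∘ₗ ((C.Reg E).linearProjOfIsCompl S' hS') with hσ
  have hσ_on : ∀ (x : C.F) (hx : x ∈ C.Reg E), σ x = σ₀ (π ⟨x, hx⟩) := by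
    intro x hx
    rw [hσ]
    simp only [LinearMap.comp_apply]
    rw [show ((C.Reg E).linearProjOfIsCompl S' hS') x = ⟨x, hx⟩ from
      Submodule.linearProjOfIsCompl_apply_left hS' ⟨x, hx⟩]
  have hkill : ∀ f ∈ C.VanishIdeal E, σ f = 0 := by
    intro f hf
    have hfReg : f ∈ C.Reg E := C.Vanish_le_Reg hE hf
    rw [hσ_on f hfReg]
    have hz : π ⟨f, hfReg⟩ = 0 := by
      rw [hπ, Submodule.mkQ_apply]
      exact (Submodule.Quotient.mk_eq_zero I').mpr hf
    rw [hz, map_zero]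
  -- the entries of the multiplication table
  have hentry : ∀ (n : ℕ) (hn : n < dN), σ₀ (pw n) = if n = dN - 1 then 1 else 0 := by
    intro n hn
    have hbn : pw n = b ⟨n, hn⟩ := (hbv ⟨n, hn⟩).symm
    rw [hbn, hσ₀, Module.Basis.coord_apply, Module.Basis.repr_self, Finsupp.single_apply]
    by_cases hh : n = dN - 1
    · rw [if_pos hh, if_pos (by rw [hlast]; exact Fin.ext hh)]
    · rw [if_neg hh, if_neg (by rw [hlast]; exact fun hcon => hh (by
        have := congrArg Fin.val hcon
        simpa using this))]
  -- key nondegeneracy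
  have hkey : ∀ (x : C.F), x ∈ C.Reg E → (∀ j : ℕ, σ (x * a ^ j) = 0)
      → x ∈ C.VanishIdeal E := by
    intro x hx hzero
    by_contra hnot
    set z : (↥(C.Reg E) ⧸ I') := π ⟨x, hx⟩ with hz
    set γ : Fin dN →₀ k := b.repr z with hγ
    have hzne : z ≠ 0 := by
      intro h
      apply hnot
      have := (Submodule.Quotient.mk_eq_zero I').mp (by rw [← Submodule.mkQ_apply]; exact h)
      exact this
    have hγne : γ ≠ 0 := fun h => hzne ((LinearEquiv.map_eq_zero_iff b.repr).mp h)
    have hsuppne : γ.support.Nonempty := Finsupp.support_nonempty_iff.mpr hγne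
    set i0 := γ.support.max' hsuppne with hi0
    have hi0mem : i0 ∈ γ.support := γ.support.max'_mem hsuppne
    have hmax : ∀ i ∈ γ.support, i ≤ i0 := fun i hi => Finset.le_max' _ i hi
    set j : ℕ := dN - 1 - (i0 : ℕ) with hj
    have hi0lt : (i0 : ℕ) < dN := i0.isLt
    have hij : (i0 : ℕ) + j = dN - 1 := by omega
    have hrepr : z = ∑ i : Fin dN, γ i • pw (i : ℕ) := by
      conv_lhs => rw [← b.sum_repr z]
      congr 1
      funext i
      rw [hbv i, hγ]
    have hdiff : x - (∑ i : Fin dN, γ i • a ^ (i : ℕ)) ∈ C.VanishIdeal E := by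
      have h1 : π ⟨x, hx⟩ = π ⟨∑ i : Fin dN, γ i • a ^ (i : ℕ), hsmem γ _⟩ :=
        hrepr.trans (hπsum γ (fun i => (i : ℕ))).symm
      rw [hπ, Submodule.mkQ_apply, Submodule.mkQ_apply] at h1
      have h2 := (Submodule.Quotient.eq I').mp h1
      exact h2
    have hdiffj : x * a ^ j - (∑ i : Fin dN, γ i • a ^ ((i : ℕ) + j))
        ∈ C.VanishIdeal E := by
      have hmul := C.vanish_mul_reg hdiff (hpowmem j)
      have hexp : (x - ∑ i : Fin dN, γ i • a ^ (i : ℕ)) * a ^ j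
          = x * a ^ j - ∑ i : Fin dN, γ i • a ^ ((i : ℕ) + j) := by
        rw [sub_mul, Finset.sum_mul]
        congr 1
        exact Finset.sum_congr rfl fun i _ => by rw [smul_mul_assoc, pow_add]
      rwa [hexp] at hmul
    have hσj : σ (x * a ^ j) = ∑ i : Fin dN, γ i * σ₀ (pw ((i : ℕ) + j)) := by
      have hmul : x * a ^ j ∈ C.Reg E := C.mul_mem_Reg hx (hpowmem j)
      rw [hσ_on _ hmul]
      have hπeq : π ⟨x * a ^ j, hmul⟩
          = π ⟨∑ i : Fin dN, γ i • a ^ ((i : ℕ) + j), hsmem γ _⟩ := by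
        rw [hπ, Submodule.mkQ_apply, Submodule.mkQ_apply]
        exact (Submodule.Quotient.eq I').mpr hdiffj
      rw [hπeq, hπsum γ (fun i => (i : ℕ) + j), map_sum]
      simp only [map_smul, smul_eq_mul]
    have hval : ∑ i : Fin dN, γ i * σ₀ (pw ((i : ℕ) + j)) = γ i0 := by
      rw [← Finset.sum_subset (Finset.subset_univ γ.support)
        (fun i _ hi => by rw [Finsupp.notMem_support_iff.mp hi, zero_mul])]
      rw [Finset.sum_eq_single i0]
      · rw [hentry ((i0 : ℕ) + j) (by omega), if_pos hij, mul_one]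
      · intro i hi hne
        have hile : (i : ℕ) ≤ (i0 : ℕ) := hmax i hi
        have hilt : (i : ℕ) < (i0 : ℕ) :=
          lt_of_le_of_ne hile (fun h => hne (Fin.ext h))
        rw [hentry ((i : ℕ) + j) (by omega), if_neg (by omega), mul_zero]
      · intro h
        exact absurd hi0mem h
    have hzero' := hzero j
    rw [hσj, hval] at hzero'
    exact (Finsupp.mem_support_iff.mp hi0mem) hzero'
  refine ⟨σ, hkill, ?_, ?_, ?_⟩
  · intro a' ha' hb'
    exact hkey a' ha' (fun j => hb' (a ^ j) (hpowmem j))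
  · intro b' hb' ha'
    refine hkey b' hb' (fun j => ?_)
    rw [mul_comm]
    exact ha' (a ^ j) (hpowmem j)
  · exact hQrank
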